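/- (Semi-discrete free energy dissipation) Let c_j(t) > 0 solve the semi-discrete scheme c_j' = (1/h)(e^{−ψ_{j+1/2}}(g_{j+1}−g_j)/h − e^{−ψ_{j−1/2}}(g_j−g_{j−1})/h) with zero boundary fluxes, where g_j = c_j e^{ψ_j}, ψ_{j+1/2} = (ψ_j+ψ_{j+1})/2, and ψ_j solves the discrete Poisson equation ψ_{j+1} − 2ψ_j + ψ_{j−1} = −h²c_j with time-independent Neumann data ψ_0 = ψ_1 + hσ_a, ψ_{N+1} = ψ_N + hσ_b. Then the discrete free energy F = h∑_{j=1}^N (c_j ln c_j + c_j ψ_j / 2) + (σ_a ψ_1 + σ_b ψ_N)/2 satisfies dF/dt = −(1/h)∑_{j=1}^{N−1} e^{−(ψ_{j+1}+ψ_j)/2}(ln g_{j+1} − ln g_j)(g_{j+1} − g_j) ≤ 0. -/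

import Mathlib

lemma sum_Icc_one_eq_range (f : ℕ → ℝ) (n : ℕ) :
    ∑ j ∈ Finset.Icc 1 n, f j = ∑ i ∈ Finset.range n, f (i+1) := by
  induction n with
  | zero => simp
  | succ m ih => rw [Finset.sum_Icc_succ_top (by omega), ih, Finset.sum_range_succ]

/-- Semi-discrete free energy dissipation for the single-species scheme. -/
theorem semi_discrete_free_energy_dissipation
    (N : ℕ) (hN : 1 ≤ N) (h : ℝ) (hh : 0 < h)
    (σa σb : ℝ) (c ψ g : ℕ → ℝ → ℝ) (Fl : ℕ → ℝ → ℝ)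
    (hgdef : ∀ j t, g j t = c j t * Real.exp (ψ j t))
    (hcpos : ∀ j ∈ Finset.Icc 1 N, ∀ t : ℝ, 0 < c j t)
    (hψdiff : ∀ j, Differentiable ℝ (ψ j))
    (hFl0 : ∀ t, Fl 0 t = 0) (hFlN : ∀ t, Fl N t = 0)
    (hFl : ∀ j, 1 ≤ j → j < N → ∀ t : ℝ,
      Fl j t = Real.exp (-((ψ j t + ψ (j + 1) t) / 2)) * (g (j + 1) t - g j t) / h)
    (hscheme : ∀ j ∈ Finset.Icc 1 N, ∀ t : ℝ,
      HasDerivAt (c j) ((Fl j t - Fl (j - 1) t) / h) t)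
    (hpoisson : ∀ t : ℝ, ∀ j ∈ Finset.Icc 1 N,
      ψ (j + 1) t - 2 * ψ j t + ψ (j - 1) t = -h ^ 2 * c j t)
    (hbca : ∀ t : ℝ, ψ 0 t = ψ 1 t + h * σa)
    (hbcb : ∀ t : ℝ, ψ (N + 1) t = ψ N t + h * σb)
    (F : ℝ → ℝ)
    (hF : ∀ t, F t = h * ∑ j ∈ Finset.Icc 1 N,
        (c j t * Real.log (c j t) + c j t * ψ j t / 2)
      + (σa * ψ 1 t + σb * ψ N t) / 2) :
    ∀ t : ℝ,
      HasDerivAt F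
        (-(1 / h) * ∑ j ∈ Finset.Icc 1 (N - 1),
          Real.exp (-((ψ (j + 1) t + ψ j t) / 2)) *
            (Real.log (g (j + 1) t) - Real.log (g j t)) * (g (j + 1) t - g j t)) t ∧
      -(1 / h) * ∑ j ∈ Finset.Icc 1 (N - 1),
          Real.exp (-((ψ (j + 1) t + ψ j t) / 2)) *
            (Real.log (g (j + 1) t) - Real.log (g j t)) * (g (j + 1) t - g j t) ≤ 0 := by
  obtain ⟨M, hM⟩ : ∃ M, N = M + 1 := ⟨N - 1, by omega⟩
  subst hM
  intro t
  simp only [Nat.add_sub_cancel]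
  set P : ℕ → ℝ := fun j => ψ j t with hP
  set P' : ℕ → ℝ := fun j => deriv (ψ j) t with hP'
  set A : ℕ → ℝ := fun j => c j t with hA
  set A' : ℕ → ℝ := fun j => (Fl j t - Fl (j - 1) t) / h with hA'
  set L : ℕ → ℝ := fun j => Fl j t with hL
  set G : ℕ → ℝ := fun j => g j t with hG
  set Q : ℕ → ℝ := fun j => Real.log (g j t) with hQ
  have hψd : ∀ j, HasDerivAt (ψ j) (P' j) t := fun j => (hψdiff j t).hasDerivAt
  have hcd : ∀ j ∈ Finset.Icc 1 (M + 1), HasDerivAt (c j) (A' j) t := fun j hj => hscheme j hj t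
  have hApos : ∀ j ∈ Finset.Icc 1 (M + 1), 0 < A j := fun j hj => hcpos j hj t
  have hGpos : ∀ j ∈ Finset.Icc 1 (M + 1), 0 < G j := by
    intro j hj
    simp only [hG, hgdef j t]
    exact mul_pos (hcpos j hj t) (Real.exp_pos _)
  have hQlog : ∀ j ∈ Finset.Icc 1 (M + 1), Q j = Real.log (A j) + P j := by
    intro j hj
    simp only [hQ, hgdef j t]
    rw [Real.log_mul (ne_of_gt (hcpos j hj t)) (Real.exp_ne_zero _), Real.log_exp]
  have hP'0 : P' 0 = P' 1 := by
    have h1 : HasDerivAt (ψ 0) (P' 1) t :=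
      ((hψd 1).add_const (h * σa)).congr_of_eventuallyEq
        (Filter.Eventually.of_forall fun x => hbca x)
    rw [hP']; exact h1.deriv
  have hP'N : P' (M + 1 + 1) = P' (M + 1) := by
    have h1 : HasDerivAt (ψ (M + 1 + 1)) (P' (M + 1)) t :=
      ((hψd (M + 1)).add_const (h * σb)).congr_of_eventuallyEq
        (Filter.Eventually.of_forall fun x => hbcb x)
    rw [hP']; exact h1.deriv
  have hpois' : ∀ j ∈ Finset.Icc 1 (M + 1),
      P' (j + 1) - 2 * P' j + P' (j - 1) = -h ^ 2 * A' j := by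
    intro j hj
    have h1 : HasDerivAt (fun s => ψ (j + 1) s - 2 * ψ j s + ψ (j - 1) s)
        (P' (j + 1) - 2 * P' j + P' (j - 1)) t :=
      (((hψd (j + 1)).sub ((hψd j).const_mul 2)).add (hψd (j - 1)))
    have h2 : HasDerivAt (fun s => -h ^ 2 * c j s)
        (P' (j + 1) - 2 * P' j + P' (j - 1)) t :=
      h1.congr_of_eventuallyEq (Filter.Eventually.of_forall fun x => (hpoisson x j hj).symm)
    have h3 : HasDerivAt (fun s => -h ^ 2 * c j s) (-h ^ 2 * A' j) t :=
      (hcd j hj).const_mul _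
    exact h2.unique h3
  have hDj : ∀ j ∈ Finset.Icc 1 (M + 1),
      HasDerivAt (fun s => c j s * Real.log (c j s) + c j s * ψ j s / 2)
        (A' j * Real.log (A j) + A j * (A' j / A j) + (A' j * P j + A j * P' j) / 2) t := by
    intro j hj
    have hc := hcd j hj
    have hlog : HasDerivAt (fun s => Real.log (c j s)) (A' j / A j) t :=
      hc.log (ne_of_gt (hApos j hj))
    exact (hc.mul hlog).add ((hc.mul (hψd j)).div_const 2)
  have hFd : HasDerivAt F
      (h * ∑ j ∈ Finset.Icc 1 (M + 1),
        (A' j * Real.log (A j) + A j * (A' j / A j) + (A' j * P j + A j * P' j) / 2)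
      + (σa * P' 1 + σb * P' (M + 1)) / 2) t := by
    have hsum :
        HasDerivAt (fun s => ∑ j ∈ Finset.Icc 1 (M + 1),
          (c j s * Real.log (c j s) + c j s * ψ j s / 2))
        (∑ j ∈ Finset.Icc 1 (M + 1),
          (A' j * Real.log (A j) + A j * (A' j / A j) + (A' j * P j + A j * P' j) / 2)) t :=
      HasDerivAt.fun_sum hDj
    have hbig := (hsum.const_mul h).add
      ((((hψd 1).const_mul σa).add ((hψd (M + 1)).const_mul σb)).div_const 2)
    exact hbig.congr_of_eventuallyEq (Filter.Eventually.of_forall fun x => hF x)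
  have hVal : ∀ j ∈ Finset.Icc 1 (M + 1),
      A' j * Real.log (A j) + A j * (A' j / A j) + (A' j * P j + A j * P' j) / 2
        = A' j * (Q j + 1) + (A j * P' j - A' j * P j) / 2 := by
    intro j hj
    have h0 : A j ≠ 0 := ne_of_gt (hApos j hj)
    rw [hQlog j hj]
    field_simp
    ring
  -- Green identity by telescoping
  have hGreen : h ^ 2 * ∑ i ∈ Finset.range (M + 1),
      (A' (i + 1) * P (i + 1) - A (i + 1) * P' (i + 1))
      = h * σb * P' (M + 1) + h * σa * P' 1 := by
    have hW := Finset.sum_range_sub (fun i => P (i + 1) * P' i - P' (i + 1) * P i) (M + 1)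
    have hterm : ∀ i ∈ Finset.range (M + 1),
        (P (i + 1 + 1) * P' (i + 1) - P' (i + 1 + 1) * P (i + 1))
          - (P (i + 1) * P' i - P' (i + 1) * P i)
        = h ^ 2 * (A' (i + 1) * P (i + 1) - A (i + 1) * P' (i + 1)) := by
      intro i hi
      have hmem : i + 1 ∈ Finset.Icc 1 (M + 1) := by
        simp only [Finset.mem_range] at hi
        simp only [Finset.mem_Icc]; omega
      have hp := hpoisson t (i + 1) hmem
      have hp' := hpois' (i + 1) hmem
      simp only [Nat.add_sub_cancel] at hp hp'
      simp only [hP, hA, hA'] at *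
      linear_combination (deriv (ψ (i+1)) t) * hp - (ψ (i+1) t) * hp'
    rw [Finset.sum_congr rfl hterm] at hW
    rw [← Finset.mul_sum] at hW
    rw [hW]
    have e1 : P (M + 1 + 1) = P (M + 1) + h * σb := by simp only [hP]; exact hbcb t
    have e5 : P 0 = P 1 + h * σa := by simp only [hP]; exact hbca t
    rw [e1, hP'N, e5, hP'0]
    ring
  -- flux telescoping
  have hTel : ∑ i ∈ Finset.range (M + 1), (L (i + 1) - L i) = 0 := by
    rw [Finset.sum_range_sub L (M + 1)]
    simp only [hL, hFlN t, hFl0 t, sub_zero]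
  have hA'L : ∀ i : ℕ, A' (i + 1) = (L (i + 1) - L i) / h := by
    intro i
    simp only [hA', hL, Nat.add_sub_cancel]
  -- Abel summation
  have hAbel : ∑ i ∈ Finset.range (M + 1), (L (i + 1) - L i) * Q (i + 1)
      = -∑ i ∈ Finset.range M, L (i + 1) * (Q (i + 1 + 1) - Q (i + 1)) := by
    have e1 : ∑ i ∈ Finset.range (M + 1), (L (i + 1) - L i) * Q (i + 1)
        = ∑ i ∈ Finset.range (M + 1), L (i + 1) * Q (i + 1)
          - ∑ i ∈ Finset.range (M + 1), L i * Q (i + 1) := by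
      rw [← Finset.sum_sub_distrib]
      exact Finset.sum_congr rfl fun i _ => by ring
    have e2 : ∑ i ∈ Finset.range (M + 1), L (i + 1) * Q (i + 1)
        = ∑ i ∈ Finset.range M, L (i + 1) * Q (i + 1) + L (M + 1) * Q (M + 1) :=
      Finset.sum_range_succ _ M
    have e3 : ∑ i ∈ Finset.range (M + 1), L i * Q (i + 1)
        = ∑ i ∈ Finset.range M, L (i + 1) * Q (i + 1 + 1) + L 0 * Q 1 :=
      Finset.sum_range_succ' _ M
    have eLN : L (M + 1) = 0 := hFlN t
    have eL0 : L 0 = 0 := hFl0 t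
    rw [e1, e2, e3, eLN, eL0, zero_mul, zero_mul, add_zero, add_zero,
      ← Finset.sum_sub_distrib, ← Finset.sum_neg_distrib]
    exact Finset.sum_congr rfl fun i _ => by ring
  have hLval : ∀ i ∈ Finset.range M,
      L (i + 1) = Real.exp (-((P (i + 1) + P (i + 1 + 1)) / 2))
        * (G (i + 1 + 1) - G (i + 1)) / h := by
    intro i hi
    simp only [Finset.mem_range] at hi
    exact hFl (i + 1) (by omega) (by omega) t
  -- the main derivative identity
  have hmain : h * ∑ j ∈ Finset.Icc 1 (M + 1),
        (A' j * Real.log (A j) + A j * (A' j / A j) + (A' j * P j + A j * P' j) / 2)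
      + (σa * P' 1 + σb * P' (M + 1)) / 2
      = -(1 / h) * ∑ j ∈ Finset.Icc 1 M,
          Real.exp (-((P (j + 1) + P j) / 2)) * (Q (j + 1) - Q j) * (G (j + 1) - G j) := by
    rw [Finset.sum_congr rfl hVal, sum_Icc_one_eq_range, sum_Icc_one_eq_range]
    have split : ∑ i ∈ Finset.range (M + 1),
        (A' (i + 1) * (Q (i + 1) + 1) + (A (i + 1) * P' (i + 1) - A' (i + 1) * P (i + 1)) / 2)
        = ∑ i ∈ Finset.range (M + 1), A' (i + 1) * (Q (i + 1) + 1)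
          - (∑ i ∈ Finset.range (M + 1),
              (A' (i + 1) * P (i + 1) - A (i + 1) * P' (i + 1))) / 2 := by
      rw [Finset.sum_div, ← Finset.sum_sub_distrib]
      exact Finset.sum_congr rfl fun i _ => by ring
    rw [split]
    have hGr : ∑ i ∈ Finset.range (M + 1),
        (A' (i + 1) * P (i + 1) - A (i + 1) * P' (i + 1))
        = (σb * P' (M + 1) + σa * P' 1) / h := by
      have hne : h ≠ 0 := ne_of_gt hh
      have h2 : h ^ 2 ≠ 0 := pow_ne_zero _ hne
      have step : ∑ i ∈ Finset.range (M + 1),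
          (A' (i + 1) * P (i + 1) - A (i + 1) * P' (i + 1))
          = (h * σb * P' (M + 1) + h * σa * P' 1) / h ^ 2 := by
        rw [eq_div_iff h2]; linear_combination hGreen
      rw [step]
      field_simp
    rw [hGr]
    have hsplit2 : ∑ i ∈ Finset.range (M + 1), A' (i + 1) * (Q (i + 1) + 1)
        = (∑ i ∈ Finset.range (M + 1), (L (i + 1) - L i) * Q (i + 1)) / h
          + (∑ i ∈ Finset.range (M + 1), (L (i + 1) - L i)) / h := by
      rw [Finset.sum_div, Finset.sum_div, ← Finset.sum_add_distrib]
      refine Finset.sum_congr rfl fun i _ => ?_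
      rw [hA'L i]; ring
    rw [hsplit2, hTel, hAbel]
    have hsum_eq : ∑ i ∈ Finset.range M, L (i + 1) * (Q (i + 1 + 1) - Q (i + 1))
        = (∑ i ∈ Finset.range M,
            Real.exp (-((P (i + 1 + 1) + P (i + 1)) / 2)) * (Q (i + 1 + 1) - Q (i + 1))
              * (G (i + 1 + 1) - G (i + 1))) / h := by
      rw [Finset.sum_div]
      refine Finset.sum_congr rfl fun i hi => ?_
      rw [hLval i hi, add_comm (P (i + 1 + 1)) (P (i + 1))]
      ring
    rw [hsum_eq]
    have hne : h ≠ 0 := ne_of_gt hh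
    field_simp
    ring
  constructor
  · exact hmain ▸ hFd
  · have hnonneg : 0 ≤ ∑ j ∈ Finset.Icc 1 M,
        Real.exp (-((P (j + 1) + P j) / 2)) * (Q (j + 1) - Q j) * (G (j + 1) - G j) := by
      refine Finset.sum_nonneg fun j hj => ?_
      simp only [Finset.mem_Icc] at hj
      have hj1 : j ∈ Finset.Icc 1 (M + 1) := by simp only [Finset.mem_Icc]; omega
      have hj2 : j + 1 ∈ Finset.Icc 1 (M + 1) := by simp only [Finset.mem_Icc]; omega
      have hg1 : 0 < G j := hGpos j hj1
      have hg2 : 0 < G (j + 1) := hGpos (j + 1) hj2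
      have hQG : ∀ k, Q k = Real.log (G k) := fun k => rfl
      have key : 0 ≤ (Q (j + 1) - Q j) * (G (j + 1) - G j) := by
        rcases le_total (G j) (G (j + 1)) with hle | hle
        · refine mul_nonneg (sub_nonneg.2 ?_) (sub_nonneg.2 hle)
          rw [hQG, hQG]; exact Real.log_le_log hg1 hle
        · have ha : Q (j + 1) - Q j ≤ 0 := by
            rw [sub_nonpos, hQG, hQG]; exact Real.log_le_log hg2 hle
          have hb : G (j + 1) - G j ≤ 0 := sub_nonpos.2 hle
          nlinarith
      calc (0:ℝ) ≤ Real.exp (-((P (j + 1) + P j) / 2))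
            * ((Q (j + 1) - Q j) * (G (j + 1) - G j)) :=
          mul_nonneg (Real.exp_pos _).le key
        _ = _ := by ring
    have : -(1 / h) * ∑ j ∈ Finset.Icc 1 M,
        Real.exp (-((P (j + 1) + P j) / 2)) * (Q (j + 1) - Q j) * (G (j + 1) - G j) ≤ 0 := by
      rw [neg_mul]
      exact neg_nonpos.2 (mul_nonneg (by positivity) hnonneg)
    exact this
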